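/- There exist a problem-sensitive model M, a world w of M, and distinct atomic propositions p, q such that M, w ⊨ ⊞(p ↔ q) and M, w ⊨ Ip, but M, w ⊭ Iq. Consequently, the principles of closure under necessary equivalence (⊞(φ ↔ ψ) → (Iφ ↔ Iψ)), necessary entailment (⊞(φ → ψ) → (Iφ → Iψ)), closure under logical entailment, and closure under logical equivalence are all invalid over the class of problem-sensitive models, even for atomic propositions. -/

import Mathlib

/-- Formulas of classical propositional logic `L_CPL` over a countable set
of atomic propositions (represented by natural numbers). -/
inductive CPL : Type
  | top : CPL
  | atom : ℕ → CPL
  | neg : CPL → CPL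
  | or : CPL → CPL → CPL
  | and : CPL → CPL → CPL
  deriving DecidableEq
/-- Material implication in `L_CPL`: `φ → ψ := ¬φ ∨ ψ`. -/
def CPL.imp (φ ψ : CPL) : CPL := .or (.neg φ) ψ

/-- Material biconditional in `L_CPL`: `φ ↔ ψ := (φ → ψ) ∧ (ψ → φ)`. -/
def CPL.iff (φ ψ : CPL) : CPL := .and (φ.imp ψ) (ψ.imp φ)
/-- Formulas of the language `L_Int`, extending `L_CPL` (embedded via `of`) by
negation, disjunction, conjunction, the global modality `⊞` (`box`) and the
intention modality `I` (`int`), which applies only to `L_CPL` formulas. -/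
inductive Form : Type
  | of : CPL → Form
  | neg : Form → Form
  | or : Form → Form → Form
  | and : Form → Form → Form
  | box : Form → Form
  | int : CPL → Form
  deriving DecidableEq
/-- A problem-sensitive model `M = (W, R, (P, ⊕, s), f, V)`: a nonempty set of
worlds, a serial accessibility (conative) relation, a problems model, a
function `f` assigning to each world the decision problem the agent faces
there, and a valuation. -/
structure PSModel where
  W : Type
  Wnonempty : Nonempty W
  R : W → W → Prop
  serial : ∀ w, ∃ v, R w v
  P : Type
  Pnonempty : Nonempty P
  fuse : P → P → P
  idem : ∀ a, fuse a a = a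
  comm : ∀ a b, fuse a b = fuse b a
  assoc : ∀ a b c, fuse (fuse a b) c = fuse a (fuse b c)
  fusion : ∀ A : Set P, ∃ a, (∀ x ∈ A, fuse x a = a) ∧
    ∀ b, (∀ x ∈ A, fuse x b = b) → fuse a b = b
  satom : ℕ → Set P
  upward : ∀ (p : ℕ) (a b : P), fuse a b = b → a ∈ satom p → b ∈ satom p
  f : W → P
  V : ℕ → Set W

/-- The extension of the solution assignment `s` to the whole language `L_CPL`. -/
def PSModel.sol (M : PSModel) : CPL → Set M.P
  | .top => Set.univ
  | .atom p => M.satom p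
  | .neg φ => M.sol φ
  | .or φ ψ => M.sol φ ∩ M.sol ψ
  | .and φ ψ => {c | ∃ a ∈ M.sol φ, ∃ b ∈ M.sol ψ, c = M.fuse a b}

/-- Classical satisfaction of `L_CPL` formulas at a world. -/
def PSModel.satCPL (M : PSModel) : M.W → CPL → Prop
  | _, .top => True
  | w, .atom p => w ∈ M.V p
  | w, .neg φ => ¬ M.satCPL w φ
  | w, .or φ ψ => M.satCPL w φ ∨ M.satCPL w ψ
  | w, .and φ ψ => M.satCPL w φ ∧ M.satCPL w ψ
/-- Satisfaction of `L_Int` formulas in a problem-sensitive model: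
Boolean clauses are classical, `M,w ⊨ ⊞φ` iff `φ` holds at every world, and
`M,w ⊨ Iα` iff `α` holds at every conative alternative of `w` and the decision
problem `f(w)` lies in `s(α)`. -/
def PSModel.sat (M : PSModel) : M.W → Form → Prop
  | w, .of α => M.satCPL w α
  | w, .neg φ => ¬ M.sat w φ
  | w, .or φ ψ => M.sat w φ ∨ M.sat w ψ
  | w, .and φ ψ => M.sat w φ ∧ M.sat w ψ
  | _, .box φ => ∀ v, M.sat v φ
  | w, .int α => (∀ v, M.R w v → M.satCPL v α) ∧ M.f w ∈ M.sol α

def Mctr : PSModel where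
  W := Unit
  Wnonempty := ⟨()⟩
  R := fun _ _ => True
  serial := fun _ => ⟨(), trivial⟩
  P := Unit
  Pnonempty := ⟨()⟩
  fuse := fun _ _ => ()
  idem := fun a => rfl
  comm := fun _ _ => rfl
  assoc := fun _ _ _ => rfl
  fusion := fun _ => ⟨(), fun _ _ => rfl, fun _ _ => rfl⟩
  satom := fun n => if n = 0 then Set.univ else ∅
  upward := by intro p a b h ha; cases a; cases b; exact ha
  f := fun _ => ()
  V := fun _ => Set.univ

lemma Mctr_Ip : Mctr.sat () (.int (.atom 0)) := by
  constructor
  · intro v _; trivial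
  · simp [Mctr, PSModel.sol]
    exact trivial

lemma Mctr_not_Iq : ¬ Mctr.sat () (.int (.atom 1)) := by
  intro ⟨_, h⟩
  simp [Mctr, PSModel.sol] at h
  exact h

lemma Mctr_not_Iψ : ¬ Mctr.sat () (.int ((CPL.atom 0).or ((CPL.atom 0).and (CPL.atom 1)))) := by
  intro ⟨_, h⟩
  obtain ⟨_, ⟨a, _, b, hb, _⟩⟩ := h
  simp [Mctr, PSModel.sol] at hb
  exact hb

/-- There are a problem-sensitive model `M`, a world `w`, and
distinct atoms `p, q` with `M,w ⊨ ⊞(p ↔ q)` and `M,w ⊨ Ip` but `M,w ⊭ Iq`.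
Consequently, necessary equivalence `⊞(φ ↔ ψ) → (Iφ ↔ Iψ)`, necessary
entailment `⊞(φ → ψ) → (Iφ → Iψ)`, closure under logical entailment, and
closure under logical equivalence are all invalid over the class of
problem-sensitive models, even for atomic propositions. -/
theorem closure_principles_invalid :
    (∃ (M : PSModel) (w : M.W) (p q : ℕ), p ≠ q ∧
      M.sat w (.box (.of ((CPL.atom p).iff (CPL.atom q)))) ∧
      M.sat w (.int (.atom p)) ∧ ¬ M.sat w (.int (.atom q))) ∧
    -- necessary equivalence is invalid
    (¬ ∀ (M : PSModel) (w : M.W) (φ ψ : CPL),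
        M.sat w (.box (.of (φ.iff ψ))) →
          (M.sat w (.int φ) ↔ M.sat w (.int ψ))) ∧
    -- necessary entailment is invalid
    (¬ ∀ (M : PSModel) (w : M.W) (φ ψ : CPL),
        M.sat w (.box (.of (φ.imp ψ))) →
          M.sat w (.int φ) → M.sat w (.int ψ)) ∧
    -- closure under logical entailment is invalid
    (¬ ∀ φ ψ : CPL,
        (∀ (M : PSModel) (w : M.W), M.satCPL w (φ.imp ψ)) →
          ∀ (M : PSModel) (w : M.W), M.sat w (.int φ) → M.sat w (.int ψ)) ∧
    -- closure under logical equivalence is invalid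
    (¬ ∀ φ ψ : CPL,
        (∀ (M : PSModel) (w : M.W), M.satCPL w (φ.iff ψ)) →
          ∀ (M : PSModel) (w : M.W), (M.sat w (.int φ) ↔ M.sat w (.int ψ))) := by
  have main : Mctr.sat () (.box (.of ((CPL.atom 0).iff (CPL.atom 1)))) ∧
      Mctr.sat () (.int (.atom 0)) ∧ ¬ Mctr.sat () (.int (.atom 1)) := by
    refine ⟨?_, Mctr_Ip, Mctr_not_Iq⟩
    intro v
    simp [PSModel.sat, PSModel.satCPL, CPL.iff, CPL.imp, Mctr]
    exact Or.inr trivial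
  refine ⟨⟨Mctr, (), 0, 1, by decide, main⟩, ?_, ?_, ?_, ?_⟩
  · intro h
    exact main.2.2 ((h Mctr () (.atom 0) (.atom 1) main.1).mp main.2.1)
  · intro h
    refine main.2.2 (h Mctr () (.atom 0) (.atom 1) ?_ main.2.1)
    intro v
    simp [PSModel.sat, PSModel.satCPL, CPL.imp, Mctr]
    exact Or.inr trivial
  · intro h
    refine Mctr_not_Iψ (h (.atom 0) ((CPL.atom 0).or ((CPL.atom 0).and (CPL.atom 1))) ?_ Mctr () Mctr_Ip)
    intro M w
    simp [PSModel.satCPL, CPL.imp]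
    tauto
  · intro h
    refine Mctr_not_Iψ ((h (.atom 0) ((CPL.atom 0).or ((CPL.atom 0).and (CPL.atom 1))) ?_ Mctr ()).mp Mctr_Ip)
    intro M w
    simp [PSModel.satCPL, CPL.iff, CPL.imp]
    tauto
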